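/- Under the standing assumptions (X Banach, Y Hilbert, A : X → Y bounded linear, R proper, lower semicontinuous, c₀-strongly convex, Ax = y solvable in dom(R), y₁, y₂, … i.i.d. Y-valued with E[y₁] = y and 0 < σ² := E[‖y₁−y‖²] < ∞, ȳ⁽ⁿ⁾ the sample mean), consider the dual gradient iterates {x_t⁽ⁿ⁾, λ_t⁽ⁿ⁾} with data ȳ⁽ⁿ⁾, λ₀⁽ⁿ⁾ = 0, and step size 0 < γ < 4c₀/‖A‖². Let Δ_t⁽ⁿ⁾ := D_R^{A*λ_t⁽ⁿ⁾}(x†, x_t⁽ⁿ⁾) be the Bregman distance to the unique R-minimizing solution x†. Then for all integers t ≥ 0, E[Δ_{t+1}⁽ⁿ⁾] − E[Δ_t⁽ⁿ⁾] ≤ C₁σ²/n with C₁ := c₀γ/(4c₀ − γ‖A‖²). -/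

import Mathlib

open MeasureTheory ProbabilityTheory Filter Topology
open scoped RealInnerProductSpace ENNReal BigOperators

/-- The sample mean `ȳ⁽ⁿ⁾ = (1/n) ∑_{i<n} yᵢ` of the first `n` measurements. -/
noncomputable def sampleMean {Y Ω : Type*} [NormedAddCommGroup Y] [NormedSpace ℝ Y]
    (ys : ℕ → Ω → Y) (n : ℕ) (ω : Ω) : Y :=
  (n : ℝ)⁻¹ • ∑ i ∈ Finset.range n, ys i ω

/-- The Bregman distance `D_R^{A*λ}(u, v) = R(u) - R(v) - ⟨A*λ, u - v⟩` induced by `R`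
at `v` in the direction `A*λ`. -/
noncomputable def bregman {X Y : Type*} [NormedAddCommGroup X] [NormedSpace ℝ X]
    [NormedAddCommGroup Y] [InnerProductSpace ℝ Y]
    (R : X → ℝ≥0∞) (A : X →L[ℝ] Y) (lam : Y) (u v : X) : ℝ :=
  (R u).toReal - (R v).toReal - ⟪lam, A u - A v⟫

section Aux

variable {X Y : Type*} [NormedAddCommGroup X] [NormedSpace ℝ X]
  [NormedAddCommGroup Y] [InnerProductSpace ℝ Y]

/-- The first-order optimality condition for the dual gradient subproblem. -/
def IsDualMin (R : X → ℝ≥0∞) (A : X →L[ℝ] Y) (lam : Y) (x : X) : Prop :=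
  R x ≠ ⊤ ∧ ∀ z : X,
    ENNReal.ofReal ((R x).toReal - ⟪lam, A x⟫ + ⟪lam, A z⟫) ≤ R z

theorem IsDualMin.sub_real {R : X → ℝ≥0∞} {A : X →L[ℝ] Y} {lam : Y} {x : X}
    (h : IsDualMin R A lam x) {z : X} (hz : R z ≠ ⊤) :
    (R x).toReal + ⟪lam, A z - A x⟫ ≤ (R z).toReal := by
  have h2 := h.2 z
  rw [← ENNReal.ofReal_toReal hz] at h2
  have h3 := (ENNReal.ofReal_le_ofReal_iff ENNReal.toReal_nonneg).mp h2
  rw [inner_sub_right]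
  linarith

theorem IsDualMin.bregman_lower {R : X → ℝ≥0∞} {A : X →L[ℝ] Y} {c₀ : ℝ} (hc₀ : 0 < c₀)
    (hsconv : ∀ u v : X, R u ≠ ⊤ → R v ≠ ⊤ → ∀ s : ℝ, 0 ≤ s → s ≤ 1 →
      R (s • u + (1 - s) • v) + ENNReal.ofReal (c₀ * s * (1 - s) * ‖u - v‖ ^ 2)
        ≤ ENNReal.ofReal s * R u + ENNReal.ofReal (1 - s) * R v)
    {lam : Y} {x : X} (h : IsDualMin R A lam x) {u : X} (hu : R u ≠ ⊤) :
    c₀ * ‖u - x‖ ^ 2 ≤ (R u).toReal - (R x).toReal - ⟪lam, A u - A x⟫ := by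
  set Q : ℝ := ‖u - x‖ ^ 2 with hQdef
  have hQ : 0 ≤ Q := by positivity
  set B : ℝ := (R u).toReal - (R x).toReal - ⟪lam, A u - A x⟫ with hBdef
  have key : ∀ s : ℝ, 0 < s → s ≤ 1 → c₀ * (1 - s) * Q ≤ B := by
    intro s hs hs1
    have hz := hsconv u x hu h.1 s hs.le hs1
    set z : X := s • u + (1 - s) • x with hzdef
    have hfin : ENNReal.ofReal s * R u + ENNReal.ofReal (1 - s) * R x ≠ ⊤ := by
      exact ENNReal.add_ne_top.2 ⟨ENNReal.mul_ne_top ENNReal.ofReal_ne_top hu,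
        ENNReal.mul_ne_top ENNReal.ofReal_ne_top h.1⟩
    have hzt : R z ≠ ⊤ := ne_top_of_le_ne_top hfin (le_trans le_self_add hz)
    have hcQ : 0 ≤ c₀ * s * (1 - s) * Q :=
      mul_nonneg (mul_nonneg (mul_nonneg hc₀.le hs.le) (by linarith)) hQ
    have hreal : (R z).toReal + c₀ * s * (1 - s) * Q
        ≤ s * (R u).toReal + (1 - s) * (R x).toReal := by
      have h5 := ENNReal.toReal_mono hfin hz
      rw [ENNReal.toReal_add hzt ENNReal.ofReal_ne_top, ENNReal.toReal_ofReal hcQ,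
        ENNReal.toReal_add (ENNReal.mul_ne_top ENNReal.ofReal_ne_top hu)
          (ENNReal.mul_ne_top ENNReal.ofReal_ne_top h.1),
        ENNReal.toReal_mul, ENNReal.toReal_mul, ENNReal.toReal_ofReal hs.le,
        ENNReal.toReal_ofReal (by linarith : (0:ℝ) ≤ 1 - s)] at h5
      exact h5
    have hsub := h.sub_real hzt
    have hAz : A z - A x = s • (A u - A x) := by
      rw [hzdef, map_add, A.map_smul, A.map_smul, smul_sub, sub_smul, one_smul]
      abel
    rw [hAz, real_inner_smul_right] at hsub
    have hmul : s * (c₀ * (1 - s) * Q) ≤ s * B := by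
      rw [hBdef]; nlinarith [hreal, hsub]
    exact le_of_mul_le_mul_left hmul hs
  refine le_of_forall_pos_le_add fun ε hε => ?_
  set s : ℝ := min (ε / (c₀ * Q + 1)) 1 with hsdef
  have hspos : 0 < s := lt_min (div_pos hε (by positivity)) one_pos
  have h1 := key s hspos (min_le_right _ _)
  have hsle : s * (c₀ * Q + 1) ≤ ε := by
    have := min_le_left (ε / (c₀ * Q + 1)) 1
    calc s * (c₀ * Q + 1) ≤ (ε / (c₀ * Q + 1)) * (c₀ * Q + 1) := by
          apply mul_le_mul_of_nonneg_right this (by positivity)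
      _ = ε := by field_simp
  nlinarith [mul_nonneg hspos.le hQ, mul_nonneg (mul_nonneg hc₀.le hspos.le) hQ]

theorem IsDualMin.dist_le {R : X → ℝ≥0∞} {A : X →L[ℝ] Y} {c₀ : ℝ} (hc₀ : 0 < c₀)
    (hsconv : ∀ u v : X, R u ≠ ⊤ → R v ≠ ⊤ → ∀ s : ℝ, 0 ≤ s → s ≤ 1 →
      R (s • u + (1 - s) • v) + ENNReal.ofReal (c₀ * s * (1 - s) * ‖u - v‖ ^ 2)
        ≤ ENNReal.ofReal s * R u + ENNReal.ofReal (1 - s) * R v)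
    {l1 l2 : Y} {x1 x2 : X} (h1 : IsDualMin R A l1 x1) (h2 : IsDualMin R A l2 x2) :
    ‖x1 - x2‖ ≤ ‖A‖ / (2 * c₀) * ‖l1 - l2‖ := by
  have b1 := h2.bregman_lower hc₀ hsconv h1.1
  have b2 := h1.bregman_lower hc₀ hsconv h2.1
  -- b1 : c₀‖x1 - x2‖² ≤ (R x1) - (R x2) - ⟪l2, A x1 - A x2⟫
  -- b2 : c₀‖x2 - x1‖² ≤ (R x2) - (R x1) - ⟪l1, A x2 - A x1⟫
  have hnrev : ‖x2 - x1‖ = ‖x1 - x2‖ := norm_sub_rev _ _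
  rw [hnrev] at b2
  have hsum : 2 * c₀ * ‖x1 - x2‖ ^ 2 ≤ ⟪l1 - l2, A x1 - A x2⟫ := by
    have hi : ⟪l1 - l2, A x1 - A x2⟫ = -⟪l2, A x1 - A x2⟫ - ⟪l1, A x2 - A x1⟫ := by
      rw [inner_sub_left]
      have : A x2 - A x1 = -(A x1 - A x2) := by abel
      rw [this, inner_neg_right]; ring
    rw [hi]; linarith [b1, b2]
  have hcs : ⟪l1 - l2, A x1 - A x2⟫ ≤ ‖l1 - l2‖ * (‖A‖ * ‖x1 - x2‖) := by
    refine (real_inner_le_norm _ _).trans ?_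
    have : ‖A x1 - A x2‖ ≤ ‖A‖ * ‖x1 - x2‖ := by
      rw [← map_sub]; exact A.le_opNorm _
    exact mul_le_mul_of_nonneg_left this (norm_nonneg _)
  rcases eq_or_lt_of_le (norm_nonneg (x1 - x2)) with h0 | h0
  · rw [← h0]; positivity
  · rw [div_mul_eq_mul_div, le_div_iff₀ (by positivity)]
    nlinarith [hsum.trans hcs]

theorem IsDualMin.unique {R : X → ℝ≥0∞} {A : X →L[ℝ] Y} {c₀ : ℝ} (hc₀ : 0 < c₀)
    (hsconv : ∀ u v : X, R u ≠ ⊤ → R v ≠ ⊤ → ∀ s : ℝ, 0 ≤ s → s ≤ 1 →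
      R (s • u + (1 - s) • v) + ENNReal.ofReal (c₀ * s * (1 - s) * ‖u - v‖ ^ 2)
        ≤ ENNReal.ofReal s * R u + ENNReal.ofReal (1 - s) * R v)
    {l : Y} {x1 x2 : X} (h1 : IsDualMin R A l x1) (h2 : IsDualMin R A l x2) :
    x1 = x2 := by
  have := h1.dist_le hc₀ hsconv h2
  simp only [sub_self, norm_zero, mul_zero] at this
  rw [← sub_eq_zero]
  exact norm_le_zero_iff.mp this

end Aux



/-- If `g` satisfies a Lipschitz-type estimate w.r.t. `f` and `f` has separable range,
then `g` has separable range. -/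
theorem isSeparable_range_of_lip {α Y₁ Y₂ : Type*}
    [NormedAddCommGroup Y₁] [NormedAddCommGroup Y₂]
    {f : α → Y₁} {g : α → Y₂} {K : ℝ}
    (h : ∀ a b, ‖g a - g b‖ ≤ K * ‖f a - f b‖)
    (hf : TopologicalSpace.IsSeparable (Set.range f)) :
    TopologicalSpace.IsSeparable (Set.range g) := by
  haveI := hf.separableSpace
  obtain ⟨D, hDc, hDd⟩ := TopologicalSpace.exists_countable_dense (Set.range f)
  haveI := hDc.to_subtype
  set K' : ℝ := |K| with hK'def
  have hK0 : 0 ≤ K' := abs_nonneg K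
  have h' : ∀ a b, ‖g a - g b‖ ≤ K' * ‖f a - f b‖ := fun a b =>
    (h a b).trans (mul_le_mul_of_nonneg_right (le_abs_self K) (norm_nonneg _))
  have hK1 : 0 < K' + 1 := by linarith
  have hsel : ∀ d : D, ∃ a : α, f a = ((d : Set.range f) : Y₁) := fun d => (d : Set.range f).2
  choose sel hsel using hsel
  refine ⟨g '' (Set.range sel), (Set.countable_range sel).image g, ?_⟩
  rintro _ ⟨a, rfl⟩
  rw [Metric.mem_closure_iff]
  intro ε hε
  obtain ⟨d, hd1, hd2⟩ := (Metric.dense_iff.1 hDd) ⟨f a, Set.mem_range_self a⟩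
    (ε / (2 * (K' + 1))) (by positivity)
  refine ⟨g (sel ⟨d, hd2⟩), Set.mem_image_of_mem g (Set.mem_range_self _), ?_⟩
  rw [Metric.mem_ball, Subtype.dist_eq, dist_comm] at hd1
  rw [dist_eq_norm] at hd1 ⊢
  have h2 := h' a (sel ⟨d, hd2⟩)
  rw [hsel ⟨d, hd2⟩] at h2
  have hnn : 0 ≤ ‖f a - (d : Y₁)‖ := norm_nonneg _
  have hd1' : ‖f a - (d : Y₁)‖ < ε / (2 * (K' + 1)) := hd1
  have h2' : ‖g a - g (sel ⟨d, hd2⟩)‖ ≤ K' * ‖f a - (d : Y₁)‖ := h2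
  have h3 := mul_le_mul_of_nonneg_left hd1'.le hK0
  calc ‖g a - g (sel ⟨d, hd2⟩)‖ ≤ K' * ‖f a - (d : Y₁)‖ := h2'
    _ < ε := by
        set q : ℝ := ε / (2 * (K' + 1)) with hqdef
        have hqpos : 0 < q := by positivity
        have hq : q * (2 * (K' + 1)) = ε := div_mul_cancel₀ ε (by positivity)
        nlinarith [mul_nonneg hK0 hqpos.le, mul_le_mul_of_nonneg_left hd1'.le hK0]



section IndepInner

variable {Ω : Type*} [MeasurableSpace Ω] {μ : Measure Ω} [IsProbabilityMeasure μ]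
  {Y : Type*} [NormedAddCommGroup Y] [InnerProductSpace ℝ Y] [CompleteSpace Y]
  [MeasurableSpace Y] [BorelSpace Y]

/-- Strongly measurable case of `indepFun_integral_inner`. -/
theorem indepFun_integral_inner_of_sm {f g : Ω → Y} (hfg : IndepFun f g μ)
    (hfs : StronglyMeasurable f) (hgs : StronglyMeasurable g)
    (hf : Integrable f μ) (hg : Integrable g μ) :
    ∫ ω, ⟪f ω, g ω⟫ ∂μ = ⟪∫ ω, f ω ∂μ, ∫ ω, g ω ∂μ⟫ := by
  -- the separable closed subspace containing both ranges
  set S : Submodule ℝ Y := (Submodule.span ℝ (Set.range f ∪ Set.range g)).topologicalClosure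
    with hSdef
  have hSsep : TopologicalSpace.IsSeparable (S : Set Y) := by
    rw [hSdef, Submodule.topologicalClosure_coe]
    exact ((hfs.isSeparable_range.union hgs.isSeparable_range).span).closure
  haveI : TopologicalSpace.SeparableSpace (S : Set Y) := hSsep.separableSpace
  haveI : SecondCountableTopology S := UniformSpace.secondCountable_of_separable S
  haveI : CompleteSpace S := (Submodule.isClosed_topologicalClosure _).completeSpace_coe
  have hmemf : ∀ ω, f ω ∈ S := fun ω =>
    Submodule.le_topologicalClosure _ (Submodule.subset_span (Or.inl (Set.mem_range_self ω)))
  have hmemg : ∀ ω, g ω ∈ S := fun ω =>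
    Submodule.le_topologicalClosure _ (Submodule.subset_span (Or.inr (Set.mem_range_self ω)))
  set F : Ω → S := fun ω => ⟨f ω, hmemf ω⟩ with hFdef
  set G : Ω → S := fun ω => ⟨g ω, hmemg ω⟩ with hGdef
  have hFm : Measurable F := hfs.measurable.subtype_mk
  have hGm : Measurable G := hgs.measurable.subtype_mk
  have hFi : Integrable F μ := by
    refine ⟨hFm.stronglyMeasurable.aestronglyMeasurable, ?_⟩
    exact hf.2
  have hGi : Integrable G μ := by
    refine ⟨hGm.stronglyMeasurable.aestronglyMeasurable, ?_⟩
    exact hg.2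
  -- transfer independence to S-valued functions
  have hFG : IndepFun F G μ := by
    have h1 : MeasurableSpace.comap F (inferInstance : MeasurableSpace S)
        = MeasurableSpace.comap f (inferInstance : MeasurableSpace Y) := by
      exact MeasurableSpace.comap_comp (f := (Subtype.val : S → Y)) (g := F)
    have h2 : MeasurableSpace.comap G (inferInstance : MeasurableSpace S)
        = MeasurableSpace.comap g (inferInstance : MeasurableSpace Y) := by
      exact MeasurableSpace.comap_comp (f := (Subtype.val : S → Y)) (g := G)
    unfold IndepFun Kernel.IndepFun at hfg ⊢
    rwa [h1, h2]
  -- main computation in S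
  have hmap := (indepFun_iff_map_prod_eq_prod_map_map hFm.aemeasurable hGm.aemeasurable).1 hFG
  have hinner_cont : Continuous fun p : S × S => (inner ℝ p.1 p.2 : ℝ) :=
    continuous_inner
  have hIdF : Integrable (id : S → S) (μ.map F) :=
    (integrable_map_measure aestronglyMeasurable_id hFm.aemeasurable).2 hFi
  have hIdG : Integrable (id : S → S) (μ.map G) :=
    (integrable_map_measure aestronglyMeasurable_id hGm.aemeasurable).2 hGi
  have hNormF : Integrable (fun a : S => ‖a‖) (μ.map F) := hIdF.norm
  have hNormG : Integrable (fun a : S => ‖a‖) (μ.map G) := hIdG.norm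
  have hprod_int : Integrable (fun p : S × S => (inner ℝ p.1 p.2 : ℝ))
      ((μ.map F).prod (μ.map G)) := by
    refine Integrable.mono' (hNormF.mul_prod hNormG)
      (hinner_cont.aestronglyMeasurable) ?_
    exact Filter.Eventually.of_forall fun p => norm_inner_le_norm _ _
  have step1 : ∫ ω, ⟪f ω, g ω⟫ ∂μ
      = ∫ p : S × S, (inner ℝ p.1 p.2 : ℝ) ∂((μ.map F).prod (μ.map G)) := by
    rw [← hmap, integral_map (hFm.aemeasurable.prodMk hGm.aemeasurable)
      hinner_cont.aestronglyMeasurable]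
    rfl
  have step2 : ∫ p : S × S, (inner ℝ p.1 p.2 : ℝ) ∂((μ.map F).prod (μ.map G))
      = ⟪(∫ a : S, a ∂(μ.map F) : S), (∫ b : S, b ∂(μ.map G) : S)⟫ := by
    rw [integral_prod _ hprod_int]
    have e1 : ∀ a : S, ∫ b : S, (inner ℝ (a, b).1 (a, b).2 : ℝ) ∂(μ.map G)
        = (inner ℝ a (∫ b : S, b ∂(μ.map G)) : ℝ) := fun a => integral_inner hIdG a
    rw [integral_congr_ae (Eventually.of_forall e1)]
    have e2 : ∀ a : S, (inner ℝ a (∫ b : S, b ∂(μ.map G)) : ℝ)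
        = (inner ℝ (∫ b : S, b ∂(μ.map G)) a : ℝ) := fun a => real_inner_comm _ _
    have e3 := integral_inner (𝕜 := ℝ) hIdF (∫ b : S, b ∂(μ.map G))
    exact (integral_congr_ae (Eventually.of_forall e2)).trans
      (e3.trans (real_inner_comm _ _))
  have hFint_eq : (↑(∫ ω, F ω ∂μ) : Y) = ∫ ω, f ω ∂μ := by
    calc (↑(∫ ω, F ω ∂μ) : Y) = S.subtypeL (∫ ω, F ω ∂μ) := rfl
      _ = ∫ ω, S.subtypeL (F ω) ∂μ := (S.subtypeL.integral_comp_comm hFi).symm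
      _ = ∫ ω, f ω ∂μ := rfl
  have hGint_eq : (↑(∫ ω, G ω ∂μ) : Y) = ∫ ω, g ω ∂μ := by
    calc (↑(∫ ω, G ω ∂μ) : Y) = S.subtypeL (∫ ω, G ω ∂μ) := rfl
      _ = ∫ ω, S.subtypeL (G ω) ∂μ := (S.subtypeL.integral_comp_comm hGi).symm
      _ = ∫ ω, g ω ∂μ := rfl
  have hmapint_F : ∫ a : S, a ∂(μ.map F) = ∫ ω, F ω ∂μ :=
    integral_map hFm.aemeasurable aestronglyMeasurable_id
  have hmapint_G : ∫ a : S, a ∂(μ.map G) = ∫ ω, G ω ∂μ :=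
    integral_map hGm.aemeasurable aestronglyMeasurable_id
  rw [step1, step2, hmapint_F, hmapint_G, ← hFint_eq, ← hGint_eq]
  rw [Submodule.coe_inner]

/-- Expectation of the inner product of independent integrable random vectors. -/
theorem indepFun_integral_inner {f g : Ω → Y} (hfg : IndepFun f g μ)
    (hf : Integrable f μ) (hg : Integrable g μ) :
    ∫ ω, ⟪f ω, g ω⟫ ∂μ = ⟪∫ ω, f ω ∂μ, ∫ ω, g ω ∂μ⟫ := by
  set f' := hf.1.mk f with hf'def
  set g' := hg.1.mk g with hg'def
  have hff' : f =ᵐ[μ] f' := hf.1.ae_eq_mk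
  have hgg' : g =ᵐ[μ] g' := hg.1.ae_eq_mk
  have hf's : StronglyMeasurable f' := hf.1.stronglyMeasurable_mk
  have hg's : StronglyMeasurable g' := hg.1.stronglyMeasurable_mk
  have hf'i : Integrable f' μ := hf.congr hff'
  have hg'i : Integrable g' μ := hg.congr hgg'
  have hfg' : IndepFun f' g' μ := hfg.congr hff' hgg'
  have h1 : ∫ ω, ⟪f ω, g ω⟫ ∂μ = ∫ ω, ⟪f' ω, g' ω⟫ ∂μ := by
    apply integral_congr_ae
    filter_upwards [hff', hgg'] with ω h1 h2
    rw [h1, h2]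
  rw [h1, integral_congr_ae hff', integral_congr_ae hgg']
  exact indepFun_integral_inner_of_sm hfg' hf's hg's hf'i hg'i

end IndepInner

theorem sampleMean_var {Ω : Type*} [MeasurableSpace Ω] {μ : Measure Ω}
    [IsProbabilityMeasure μ]
    {Y : Type*} [NormedAddCommGroup Y] [InnerProductSpace ℝ Y] [CompleteSpace Y]
    [MeasurableSpace Y] [BorelSpace Y]
    (ys : ℕ → Ω → Y) (y : Y) (σ2 : ℝ)
    (hmeas : ∀ i, Measurable (ys i))
    (hindep : iIndepFun ys μ)
    (hident : ∀ i, IdentDistrib (ys i) (ys 0) μ μ)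
    (hint1 : Integrable (ys 0) μ)
    (hmean : ∫ ω, ys 0 ω ∂μ = y)
    (hint2 : Integrable (fun ω => ‖ys 0 ω - y‖ ^ 2) μ)
    (hσ2 : σ2 = ∫ ω, ‖ys 0 ω - y‖ ^ 2 ∂μ)
    (n : ℕ) (hn : 1 ≤ n) :
    Integrable (fun ω => ‖sampleMean ys n ω - y‖ ^ 2) μ ∧
      ∫ ω, ‖sampleMean ys n ω - y‖ ^ 2 ∂μ = σ2 / n := by
  have hn0 : (n : ℝ) ≠ 0 := Nat.cast_ne_zero.2 (by omega)
  set z : ℕ → Ω → Y := fun i ω => ys i ω - y with hzdef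
  have hyint : ∀ i, Integrable (ys i) μ := fun i => (hident i).integrable_iff.2 hint1
  have hzint : ∀ i, Integrable (z i) μ := fun i => (hyint i).sub (integrable_const y)
  have hφm : Measurable (fun v : Y => v - y) :=
    (continuous_id.sub continuous_const).measurable
  have hφ2m : Measurable (fun v : Y => ‖v - y‖ ^ 2) :=
    ((continuous_id.sub continuous_const).norm.pow 2).measurable
  have hφnm : Measurable (fun v : Y => ‖v - y‖) :=
    (continuous_id.sub continuous_const).norm.measurable
  have hsq : ∀ i, Integrable (fun ω => ‖z i ω‖ ^ 2) μ := fun i =>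
    ((hident i).comp hφ2m).integrable_iff.2 hint2
  have hsqval : ∀ i, ∫ ω, ‖z i ω‖ ^ 2 ∂μ = σ2 := fun i =>
    (((hident i).comp hφ2m).integral_eq).trans hσ2.symm
  have hzmean : ∀ i, ∫ ω, z i ω ∂μ = 0 := by
    intro i
    rw [hzdef]
    rw [integral_sub (hyint i) (integrable_const y), integral_const]
    have : ∫ ω, ys i ω ∂μ = y := ((hident i).integral_eq).trans hmean
    simp [this]
  have hinner_int : ∀ i j, Integrable (fun ω => ⟪z i ω, z j ω⟫) μ := by
    intro i j
    have hmul : Integrable (fun ω => ‖z i ω‖ * ‖z j ω‖) μ := by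
      rcases eq_or_ne i j with rfl | hij
      · have := hsq i
        refine this.congr (Eventually.of_forall fun ω => ?_)
        ring
      · have hIJ : IndepFun (fun ω => ‖z i ω‖) (fun ω => ‖z j ω‖) μ := by
          have := (hindep.indepFun hij).comp hφnm hφnm
          exact this
        exact hIJ.integrable_mul (hzint i).norm (hzint j).norm
    refine Integrable.mono' hmul ((hzint i).1.inner (hzint j).1)
      (Eventually.of_forall fun ω => ?_)
    exact norm_inner_le_norm _ _
  have hinner_zero : ∀ i j, i ≠ j → ∫ ω, ⟪z i ω, z j ω⟫ ∂μ = 0 := by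
    intro i j hij
    have hIJ : IndepFun (z i) (z j) μ := by
      have := (hindep.indepFun hij).comp hφm hφm
      exact this
    rw [indepFun_integral_inner hIJ (hzint i) (hzint j), hzmean i, hzmean j,
      inner_zero_left]
  have hdiag : ∀ i, ∫ ω, ⟪z i ω, z i ω⟫ ∂μ = σ2 := by
    intro i
    rw [← hsqval i]
    refine integral_congr_ae (Eventually.of_forall fun ω => ?_)
    exact real_inner_self_eq_norm_sq _
  -- expansion of the squared norm
  have hrep : ∀ ω, sampleMean ys n ω - y = (n : ℝ)⁻¹ • ∑ i ∈ Finset.range n, z i ω := by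
    intro ω
    have h1 : ∑ i ∈ Finset.range n, z i ω
        = (∑ i ∈ Finset.range n, ys i ω) - n • y := by
      rw [hzdef, Finset.sum_sub_distrib, Finset.sum_const, Finset.card_range]
    rw [h1, smul_sub, sampleMean]
    congr 1
    rw [← Nat.cast_smul_eq_nsmul ℝ n y, smul_smul, inv_mul_cancel₀ hn0, one_smul]
  have hexp : ∀ ω, ‖sampleMean ys n ω - y‖ ^ 2
      = ((n : ℝ)⁻¹) ^ 2 * ∑ i ∈ Finset.range n, ∑ j ∈ Finset.range n, ⟪z i ω, z j ω⟫ := by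
    intro ω
    rw [hrep ω, norm_smul, mul_pow, norm_inv, Real.norm_natCast]
    congr 1
    rw [← real_inner_self_eq_norm_sq, sum_inner]
    refine Finset.sum_congr rfl fun i _ => ?_
    rw [inner_sum]
  have hsum_int : Integrable (fun ω => ((n : ℝ)⁻¹) ^ 2
      * ∑ i ∈ Finset.range n, ∑ j ∈ Finset.range n, ⟪z i ω, z j ω⟫) μ := by
    refine Integrable.const_mul ?_ _
    exact integrable_finset_sum _ fun i _ => integrable_finset_sum _ fun j _ => hinner_int i j
  have hint : Integrable (fun ω => ‖sampleMean ys n ω - y‖ ^ 2) μ :=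
    hsum_int.congr (Eventually.of_forall fun ω => (hexp ω).symm)
  refine ⟨hint, ?_⟩
  rw [integral_congr_ae (Eventually.of_forall hexp), integral_const_mul]
  rw [integral_finset_sum _ fun i _ => integrable_finset_sum _ fun j _ => hinner_int i j]
  have hrow : ∀ i ∈ Finset.range n,
      (∑ j ∈ Finset.range n, ∫ ω, ⟪z i ω, z j ω⟫ ∂μ) = σ2 := by
    intro i hi
    rw [Finset.sum_eq_single i (fun j _ hji => hinner_zero i j (Ne.symm hji))
      (fun hmem => absurd hi hmem)]
    exact hdiag i
  have : ∀ i ∈ Finset.range n, ∫ ω, (∑ j ∈ Finset.range n, ⟪z i ω, z j ω⟫) ∂μ = σ2 := by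
    intro i hi
    rw [integral_finset_sum _ fun j _ => hinner_int i j]
    exact hrow i hi
  rw [Finset.sum_congr rfl this, Finset.sum_const, Finset.card_range, nsmul_eq_mul]
  field_simp

section StepEst
variable {X Y : Type*} [NormedAddCommGroup X] [NormedSpace ℝ X]
  [NormedAddCommGroup Y] [InnerProductSpace ℝ Y]
/-- The pathwise one-step estimate for the dual gradient method. -/
theorem dual_step_estimate {R : X → ℝ≥0∞} {A : X →L[ℝ] Y} {c₀ γ : ℝ}
    (hc₀ : 0 < c₀) (hγ0 : 0 < γ) (hβ : 0 < 4 * c₀ - γ * ‖A‖ ^ 2)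
    (hsconv : ∀ u v : X, R u ≠ ⊤ → R v ≠ ⊤ → ∀ s : ℝ, 0 ≤ s → s ≤ 1 →
      R (s • u + (1 - s) • v) + ENNReal.ofReal (c₀ * s * (1 - s) * ‖u - v‖ ^ 2)
        ≤ ENNReal.ofReal s * R u + ENNReal.ofReal (1 - s) * R v)
    {l1 l2 b y : Y} {x1 x2 xdag : X}
    (hm1 : IsDualMin R A l1 x1) (hm2 : IsDualMin R A l2 x2)
    (hrec : l2 = l1 - γ • (A x1 - b)) (hy : A xdag = y) :
    ((R xdag).toReal - (R x2).toReal - ⟪l2, A xdag - A x2⟫)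
      - ((R xdag).toReal - (R x1).toReal - ⟪l1, A xdag - A x1⟫)
    ≤ c₀ * γ / (4 * c₀ - γ * ‖A‖ ^ 2) * ‖y - b‖ ^ 2 := by
  have h4c : (0:ℝ) < 4 * c₀ := by linarith
  have hb2 := hm1.bregman_lower hc₀ hsconv hm2.1
  set W : ℝ := ‖A x1 - b‖ with hWdef
  set En : ℝ := ‖y - b‖ with hEndef
  set dd : ℝ := ‖x1 - x2‖ with hdddef
  have e1 : ((R xdag).toReal - (R x2).toReal - ⟪l2, A xdag - A x2⟫)
      - ((R xdag).toReal - (R x1).toReal - ⟪l1, A xdag - A x1⟫)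
      = ((R x1).toReal - (R x2).toReal - ⟪l2, A x1 - A x2⟫)
        + γ * ⟪A x1 - b, y - A x1⟫ := by
    rw [hy, hrec]
    simp only [inner_sub_left, inner_sub_right, real_inner_smul_left]
    ring
  have e2 : (R x1).toReal - (R x2).toReal - ⟪l2, A x1 - A x2⟫
      ≤ γ * (W * (‖A‖ * dd)) - c₀ * dd ^ 2 := by
    have hsplit : (R x1).toReal - (R x2).toReal - ⟪l2, A x1 - A x2⟫
        = ((R x1).toReal - (R x2).toReal - ⟪l1, A x1 - A x2⟫)
          + ⟪l1 - l2, A x1 - A x2⟫ := by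
      rw [inner_sub_left]; ring
    have hb2' : (R x1).toReal - (R x2).toReal - ⟪l1, A x1 - A x2⟫ ≤ -(c₀ * dd ^ 2) := by
      have hneg : ⟪l1, A x2 - A x1⟫ = -⟪l1, A x1 - A x2⟫ := by
        rw [show A x2 - A x1 = -(A x1 - A x2) by abel, inner_neg_right]
      rw [hneg] at hb2
      have hnrm : ‖x2 - x1‖ = dd := norm_sub_rev _ _
      rw [hnrm] at hb2
      linarith
    have hl12 : l1 - l2 = γ • (A x1 - b) := by rw [hrec]; abel
    have hcs : ⟪l1 - l2, A x1 - A x2⟫ ≤ γ * (W * (‖A‖ * dd)) := by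
      rw [hl12, real_inner_smul_left]
      refine mul_le_mul_of_nonneg_left ?_ hγ0.le
      refine (real_inner_le_norm _ _).trans ?_
      refine mul_le_mul_of_nonneg_left ?_ (norm_nonneg _)
      rw [← map_sub]
      exact A.le_opNorm _
    rw [hsplit]
    linarith
  have hopt : γ * (W * (‖A‖ * dd)) - c₀ * dd ^ 2
      ≤ γ ^ 2 * ‖A‖ ^ 2 * W ^ 2 / (4 * c₀) := by
    rw [← sub_nonneg]
    have expand2 : γ ^ 2 * ‖A‖ ^ 2 * W ^ 2 / (4 * c₀) - (γ * (W * (‖A‖ * dd)) - c₀ * dd ^ 2)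
        = (γ * ‖A‖ * W - 2 * c₀ * dd) ^ 2 / (4 * c₀) := by
      field_simp
      ring
    rw [expand2]
    positivity
  have e3 : γ * ⟪A x1 - b, y - A x1⟫ = γ * ⟪A x1 - b, y - b⟫ - γ * W ^ 2 := by
    have hdec : y - A x1 = (y - b) - (A x1 - b) := by abel
    rw [hdec, inner_sub_right, real_inner_self_eq_norm_sq]
    ring
  have e4' : γ * ⟪A x1 - b, y - b⟫ ≤ γ * (W * En) :=
    mul_le_mul_of_nonneg_left (real_inner_le_norm _ _) hγ0.le
  have hfinal : γ ^ 2 * ‖A‖ ^ 2 * W ^ 2 / (4 * c₀) + γ * (W * En) - γ * W ^ 2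
      ≤ c₀ * γ / (4 * c₀ - γ * ‖A‖ ^ 2) * En ^ 2 := by
    rw [← sub_nonneg]
    have expand : c₀ * γ / (4 * c₀ - γ * ‖A‖ ^ 2) * En ^ 2
        - (γ ^ 2 * ‖A‖ ^ 2 * W ^ 2 / (4 * c₀) + γ * (W * En) - γ * W ^ 2)
        = (γ * ((4 * c₀ - γ * ‖A‖ ^ 2) * W - 2 * c₀ * En) ^ 2)
          / (4 * c₀ * (4 * c₀ - γ * ‖A‖ ^ 2)) := by
      obtain ⟨B, hB⟩ : ∃ B, B = 4 * c₀ - γ * ‖A‖ ^ 2 := ⟨_, rfl⟩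
      rw [← hB] at hβ ⊢
      have hβne := hβ.ne'
      field_simp
      rw [hB]
      ring
    rw [expand]
    positivity
  rw [e1, e3]
  linarith
end StepEst

/-- Lemma 3.5: one-step growth of the expected Bregman distance
`Δ_t⁽ⁿ⁾ = D_R^{A*λ_t⁽ⁿ⁾}(x†, x_t⁽ⁿ⁾)`:
`E[Δ_{t+1}⁽ⁿ⁾] - E[Δ_t⁽ⁿ⁾] ≤ C₁ σ²/n` with `C₁ = c₀γ/(4c₀ - γ‖A‖²)`. -/
theorem expected_bregman_one_step_growth
    {X Y : Type*} [NormedAddCommGroup X] [NormedSpace ℝ X] [CompleteSpace X]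
    [NormedAddCommGroup Y] [InnerProductSpace ℝ Y] [CompleteSpace Y]
    [MeasurableSpace Y] [BorelSpace Y]
    {Ω : Type*} [MeasurableSpace Ω] (μ : Measure Ω) [IsProbabilityMeasure μ]
    (A : X →L[ℝ] Y) (R : X → ℝ≥0∞) (c₀ : ℝ) (hc₀ : 0 < c₀)
    (hproper : ∃ u : X, R u ≠ ⊤)
    (hlsc : LowerSemicontinuous R)
    (hsconv : ∀ u v : X, R u ≠ ⊤ → R v ≠ ⊤ → ∀ s : ℝ, 0 ≤ s → s ≤ 1 →
      R (s • u + (1 - s) • v) + ENNReal.ofReal (c₀ * s * (1 - s) * ‖u - v‖ ^ 2)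
        ≤ ENNReal.ofReal s * R u + ENNReal.ofReal (1 - s) * R v)
    (y : Y) (xdag : X) (hxdag_sol : A xdag = y) (hxdag_dom : R xdag ≠ ⊤)
    (hxdag_min : ∀ z : X, A z = y → R xdag ≤ R z)
    -- the i.i.d. data
    (ys : ℕ → Ω → Y) (σ2 : ℝ)
    (hmeas : ∀ i, Measurable (ys i))
    (hindep : iIndepFun ys μ)
    (hident : ∀ i, IdentDistrib (ys i) (ys 0) μ μ)
    (hint1 : Integrable (ys 0) μ)
    (hmean : ∫ ω, ys 0 ω ∂μ = y)
    (hint2 : Integrable (fun ω => ‖ys 0 ω - y‖ ^ 2) μ)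
    (hσ2 : σ2 = ∫ ω, ‖ys 0 ω - y‖ ^ 2 ∂μ) (hσ2pos : 0 < σ2)
    -- the step size
    (γ : ℝ) (hγ0 : 0 < γ) (hγ : γ < 4 * c₀ / ‖A‖ ^ 2)
    -- the dual gradient iterates with averaged data ȳ⁽ⁿ⁾
    (xs : ℕ → ℕ → Ω → X) (lams : ℕ → ℕ → Ω → Y)
    (hlams0 : ∀ n ω, lams n 0 ω = 0)
    (hmins : ∀ n t ω, R (xs n t ω) ≠ ⊤ ∧ ∀ z : X,
      ENNReal.ofReal ((R (xs n t ω)).toReal - ⟪lams n t ω, A (xs n t ω)⟫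
        + ⟪lams n t ω, A z⟫) ≤ R z)
    (hupds : ∀ n t ω, lams n (t + 1) ω
      = lams n t ω - γ • (A (xs n t ω) - sampleMean ys n ω))
 :
    ∀ (n : ℕ), 1 ≤ n → ∀ t : ℕ,
      (∫ ω, bregman R A (lams n (t + 1) ω) xdag (xs n (t + 1) ω) ∂μ)
          - (∫ ω, bregman R A (lams n t ω) xdag (xs n t ω) ∂μ)
        ≤ (c₀ * γ / (4 * c₀ - γ * ‖A‖ ^ 2)) * σ2 / n := by
  intro n hn
  classical
  have hmins' : ∀ m t ω, IsDualMin R A (lams m t ω) (xs m t ω) := fun m t ω => hmins m t ω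
  -- basic constants
  have hA0 : 0 < ‖A‖ := by
    rcases (norm_nonneg A).eq_or_lt with h | h
    · exfalso
      rw [← h] at hγ
      norm_num at hγ
      linarith
    · exact h
  have hβ : 0 < 4 * c₀ - γ * ‖A‖ ^ 2 := by
    have := (lt_div_iff₀ (by positivity : (0:ℝ) < ‖A‖ ^ 2)).1 hγ
    linarith
  set C₁ : ℝ := c₀ * γ / (4 * c₀ - γ * ‖A‖ ^ 2) with hC₁def
  have hC₁pos : 0 < C₁ := by positivity
  -- the argmin selection on the set of dual variables admitting a minimizer
  set E : Set Y := {lam | ∃ x : X, IsDualMin R A lam x} with hEdef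
  have hFex : ∀ e : E, ∃ x : X, IsDualMin R A (e : Y) x := fun e => e.2
  choose F hF using hFex
  have hFlip : ∀ e₁ e₂ : E, ‖F e₁ - F e₂‖ ≤ ‖A‖ / (2 * c₀) * ‖(e₁ : Y) - (e₂ : Y)‖ :=
    fun e₁ e₂ => (hF e₁).dist_le hc₀ hsconv (hF e₂)
  have hFcont : Continuous F := by
    have hlip : LipschitzWith (Real.toNNReal (‖A‖ / (2 * c₀))) F := by
      apply LipschitzWith.of_dist_le_mul
      intro e₁ e₂
      rw [dist_eq_norm, Subtype.dist_eq, dist_eq_norm]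
      rw [Real.coe_toNNReal _ (by positivity)]
      exact hFlip e₁ e₂
    exact hlip.continuous
  -- strongly measurable modifications of the data
  have hyint : ∀ i, Integrable (ys i) μ := fun i => (hident i).integrable_iff.2 hint1
  set ys' : ℕ → Ω → Y := fun i => (hyint i).1.mk (ys i) with hys'def
  have hys'sm : ∀ i, StronglyMeasurable (ys' i) := fun i => (hyint i).1.stronglyMeasurable_mk
  have hys'ae : ∀ i, ys i =ᵐ[μ] ys' i := fun i => (hyint i).1.ae_eq_mk
  -- an exceptional measurable null set
  have hU : μ (⋃ i ∈ Finset.range n, {ω | ys i ω ≠ ys' i ω}) = 0 := by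
    refine measure_biUnion_null_iff (Finset.countable_toSet _) |>.2 fun i _ => ?_
    have := hys'ae i
    rwa [Filter.EventuallyEq, ae_iff] at this
  obtain ⟨N, hNsub, hNmeas, hNnull⟩ := exists_measurable_superset_of_null hU
  have hNaeset : ∀ᵐ ω ∂μ, ω ∉ N := by
    rw [ae_iff]
    have : {a | ¬ a ∉ N} = N := by ext a; simp
    rwa [this]
  have hNω : ∀ ω ∉ N, ∀ i ∈ Finset.range n, ys i ω = ys' i ω := by
    intro ω hω i hi
    by_contra hne
    exact hω (hNsub (Set.mem_biUnion hi hne))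
  have hω₀ex : ∃ ω, ω ∉ N := by
    by_contra h
    push_neg at h
    have hNuniv : N = Set.univ := by ext ω; simp [h ω]
    rw [hNuniv, measure_univ] at hNnull
    exact one_ne_zero hNnull
  obtain ⟨ω₀, hω₀⟩ := hω₀ex
  -- the strongly measurable sample mean
  set bbar : Ω → Y := fun ω => if ω ∈ N then sampleMean ys n ω₀
    else (n : ℝ)⁻¹ • ∑ i ∈ Finset.range n, ys' i ω with hbbardef
  have hbbar_sm : StronglyMeasurable bbar := by
    refine StronglyMeasurable.ite hNmeas stronglyMeasurable_const ?_
    exact (Finset.stronglyMeasurable_fun_sum _ fun i _ => hys'sm i).const_smul _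
  have hbbar_eq : ∀ ω ∉ N, bbar ω = sampleMean ys n ω := by
    intro ω hω
    rw [hbbardef]
    simp only [if_neg hω, sampleMean]
    congr 1
    exact (Finset.sum_congr rfl fun i hi => (hNω ω hω i hi).symm)
  have hbbar_rep : ∀ ω, ∃ ω', sampleMean ys n ω' = bbar ω := by
    intro ω
    by_cases h : ω ∈ N
    · refine ⟨ω₀, ?_⟩
      rw [hbbardef]
      simp only [if_pos h]
    · exact ⟨ω, (hbbar_eq ω h).symm⟩
  -- the deterministic dynamical system driven by `bbar`
  set Fbar : Y → X := fun lam => if h : lam ∈ E then F ⟨lam, h⟩ else xdag with hFbardef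
  set Lam : ℕ → Ω → Y := fun t => Nat.rec (motive := fun _ => Ω → Y) (fun _ => 0)
    (fun _ ih ω => ih ω - γ • (A (Fbar (ih ω)) - bbar ω)) t with hLamdef
  have hLam0 : ∀ ω, Lam 0 ω = 0 := fun ω => rfl
  have hLamS : ∀ t ω, Lam (t + 1) ω = Lam t ω - γ • (A (Fbar (Lam t ω)) - bbar ω) :=
    fun t ω => rfl
  have hkey : ∀ ω ω', sampleMean ys n ω' = bbar ω → ∀ t, Lam t ω = lams n t ω' := by
    intro ω ω' hww t
    induction t with
    | zero => rw [hlams0]; exact hLam0 ω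
    | succ t ih =>
      rw [hLamS, ih, hupds n t ω', hww]
      have hmem : lams n t ω' ∈ E := ⟨xs n t ω', hmins' n t ω'⟩
      have hFeq : Fbar (lams n t ω') = xs n t ω' := by
        rw [hFbardef]
        simp only [dif_pos hmem]
        exact (hF ⟨lams n t ω', hmem⟩).unique hc₀ hsconv (hmins' n t ω')
      rw [hFeq]
  have hmemLam : ∀ t ω, Lam t ω ∈ E := by
    intro t ω
    obtain ⟨ω', hw⟩ := hbbar_rep ω
    rw [hkey ω ω' hw t]
    exact ⟨xs n t ω', hmins' n t ω'⟩
  set L : ℕ → Ω → E := fun t ω => ⟨Lam t ω, hmemLam t ω⟩ with hLdef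
  have hFbarL : ∀ t ω, Fbar (Lam t ω) = F (L t ω) := by
    intro t ω
    rw [hFbardef]
    simp only [dif_pos (hmemLam t ω)]
    rfl
  have hFL : ∀ t ω, IsDualMin R A (Lam t ω) (F (L t ω)) := fun t ω => hF (L t ω)
  -- strong measurability of the iterates
  have hLamSM : ∀ t, StronglyMeasurable (Lam t) := by
    intro t
    induction t with
    | zero => exact stronglyMeasurable_const
    | succ t ih =>
      have hLmeas : Measurable (L t) := ih.measurable.subtype_mk
      have hAFm : Measurable (fun ω => A (F (L t ω))) :=
        ((A.continuous.comp hFcont).measurable).comp hLmeas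
      have hAFlip : ∀ ω ω', ‖A (F (L t ω)) - A (F (L t ω'))‖
          ≤ (‖A‖ * (‖A‖ / (2 * c₀))) * ‖Lam t ω - Lam t ω'‖ := by
        intro ω ω'
        calc ‖A (F (L t ω)) - A (F (L t ω'))‖ = ‖A (F (L t ω) - F (L t ω'))‖ := by
              rw [map_sub]
          _ ≤ ‖A‖ * ‖F (L t ω) - F (L t ω')‖ := A.le_opNorm _
          _ ≤ ‖A‖ * (‖A‖ / (2 * c₀) * ‖Lam t ω - Lam t ω'‖) := by
              refine mul_le_mul_of_nonneg_left ?_ (norm_nonneg (A : X →L[ℝ] Y))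
              exact hFlip (L t ω) (L t ω')
          _ = (‖A‖ * (‖A‖ / (2 * c₀))) * ‖Lam t ω - Lam t ω'‖ := by ring
      have hAFsm : StronglyMeasurable (fun ω => A (F (L t ω))) :=
        stronglyMeasurable_iff_measurable_separable.2
          ⟨hAFm, isSeparable_range_of_lip hAFlip ih.isSeparable_range⟩
      have hsm : StronglyMeasurable (fun ω => Lam t ω - γ • (A (F (L t ω)) - bbar ω)) :=
        ih.sub ((hAFsm.sub hbbar_sm).const_smul γ)
      have heq : Lam (t + 1) = fun ω => Lam t ω - γ • (A (F (L t ω)) - bbar ω) :=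
        funext fun ω => by rw [hLamS, hFbarL]
      rw [heq]
      exact hsm
  -- the surrogate Bregman distances
  set Δ : ℕ → Ω → ℝ := fun t ω => (R xdag).toReal - (R (F (L t ω))).toReal
    - ⟪Lam t ω, A xdag - A (F (L t ω))⟫ with hΔdef
  have hΔmeas : ∀ t, Measurable (Δ t) := by
    intro t
    have hLmeas : Measurable (L t) := (hLamSM t).measurable.subtype_mk
    have hRF : Measurable (fun e : E => (R (F e)).toReal) :=
      ((LowerSemicontinuous.comp hlsc hFcont).measurable).ennreal_toReal
    have hInner : Measurable (fun e : E => ⟪(e : Y), A xdag - A (F e)⟫) := by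
      have hcont : Continuous (fun e : E => ⟪(e : Y), A xdag - A (F e)⟫) :=
        continuous_subtype_val.inner (continuous_const.sub (A.continuous.comp hFcont))
      exact hcont.measurable
    exact (measurable_const.sub (hRF.comp hLmeas)).sub (hInner.comp hLmeas)
  have hΔnonneg : ∀ t ω, 0 ≤ Δ t ω := by
    intro t ω
    have h1 := (hFL t ω).bregman_lower hc₀ hsconv hxdag_dom
    have h2 : (0:ℝ) ≤ c₀ * ‖xdag - F (L t ω)‖ ^ 2 := by positivity
    exact h2.trans h1
  have hΔae : ∀ t, Δ t =ᵐ[μ] (fun ω => bregman R A (lams n t ω) xdag (xs n t ω)) := by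
    intro t
    filter_upwards [hNaeset] with ω hω
    have h1 : Lam t ω = lams n t ω := hkey ω ω (hbbar_eq ω hω).symm t
    have h2 : F (L t ω) = xs n t ω := by
      refine (hFL t ω).unique hc₀ hsconv ?_
      rw [h1]
      exact hmins' n t ω
    have hrfl : Δ t ω = (R xdag).toReal - (R (F (L t ω))).toReal
        - ⟪Lam t ω, A xdag - A (F (L t ω))⟫ := rfl
    rw [hrfl, h1, h2]
    rfl
  -- the one-step pathwise estimate
  have hstep : ∀ t ω, Δ (t + 1) ω - Δ t ω ≤ C₁ * ‖y - bbar ω‖ ^ 2 := by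
    intro t ω
    have hrec : Lam (t + 1) ω = Lam t ω - γ • (A (F (L t ω)) - bbar ω) := by
      rw [hLamS, hFbarL]
    exact dual_step_estimate hc₀ hγ0 hβ hsconv (hFL t ω) (hFL (t + 1) ω) hrec hxdag_sol
  -- the noise term
  have hvar := sampleMean_var ys y σ2 hmeas hindep hident hint1 hmean hint2 hσ2 n hn
  set g : Ω → ℝ := fun ω => ‖y - bbar ω‖ ^ 2 with hgdef
  have hg_ae : g =ᵐ[μ] fun ω => ‖sampleMean ys n ω - y‖ ^ 2 := by
    filter_upwards [hNaeset] with ω hω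
    show ‖y - bbar ω‖ ^ 2 = ‖sampleMean ys n ω - y‖ ^ 2
    rw [hbbar_eq ω hω, norm_sub_rev]
  have hg_int : Integrable g μ := hvar.1.congr hg_ae.symm
  have hg_val : ∫ ω, g ω ∂μ = σ2 / n := (integral_congr_ae hg_ae).trans hvar.2
  -- integrability of the Bregman distances
  have hΔint : ∀ t, Integrable (Δ t) μ := by
    intro t
    induction t with
    | zero =>
      have hconst : ∀ ω, Δ 0 ω = Δ 0 ω₀ := by
        intro ω
        have hLeq : L 0 ω = L 0 ω₀ := Subtype.ext (by
          show Lam 0 ω = Lam 0 ω₀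
          rw [hLam0, hLam0])
        show (R xdag).toReal - (R (F (L 0 ω))).toReal
            - ⟪Lam 0 ω, A xdag - A (F (L 0 ω))⟫ = Δ 0 ω₀
        rw [hLeq, hLam0]
        rfl
      exact (integrable_const (Δ 0 ω₀)).congr (Eventually.of_forall fun ω => (hconst ω).symm)
    | succ t ih =>
      refine Integrable.mono' (ih.add (hg_int.const_mul C₁))
        (hΔmeas (t + 1)).aestronglyMeasurable (Eventually.of_forall fun ω => ?_)
      rw [Real.norm_eq_abs, abs_of_nonneg (hΔnonneg (t + 1) ω)]
      have h1 := hstep t ω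
      have h2 := hΔnonneg t ω
      show Δ (t + 1) ω ≤ Δ t ω + C₁ * ‖y - bbar ω‖ ^ 2
      linarith
  -- conclusion
  intro t
  rw [← integral_congr_ae (hΔae (t + 1)), ← integral_congr_ae (hΔae t),
    ← integral_sub (hΔint (t + 1)) (hΔint t)]
  have hle : ∫ ω, (Δ (t + 1) ω - Δ t ω) ∂μ ≤ ∫ ω, C₁ * g ω ∂μ :=
    integral_mono ((hΔint (t + 1)).sub (hΔint t)) (hg_int.const_mul C₁)
      (fun ω => hstep t ω)
  refine hle.trans ?_
  rw [integral_const_mul, hg_val]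
  exact le_of_eq (by rw [hC₁def]; ring)
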